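/- arXiv:2203.12475 — 3 statements merged into one kernel-verified Lean document; each statement's English description precedes it below -/
import Mathlib

section
/- For every s ∈ ℂ with 0 < Re(s) < 1 and every real x > 0, if ζ(s) = 0 then x^{s-1} · (∑_{n ≤ x} n^{-s}) − 1/(1−s) = −ψ(x)·x^{-1} + s·x^{s-1}·∫_x^∞ ψ(t)·t^{-s-1} dt, where ψ(t) = {t} − 1/2 is the sawtooth function and {t} denotes the fractional part of t. -/
open MeasureTheory Complex Set Filter

noncomputable abbrev zzsf_psi (t : ℝ) : ℂ := ((Int.fract t - 1/2 : ℝ) : ℂ)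

lemma zzsf_meas (w : ℂ) :
    AEStronglyMeasurable (fun t : ℝ => zzsf_psi t * (t : ℂ) ^ w)
      (volume.restrict (Ioi (0:ℝ))) := by
  apply AEStronglyMeasurable.mul
  · exact (Complex.measurable_ofReal.comp
      ((measurable_fract.sub measurable_const))).aestronglyMeasurable
  · refine (ContinuousOn.aestronglyMeasurable ?_ measurableSet_Ioi)
    exact fun t ht => (continuousAt_ofReal_cpow_const t w (Or.inr (ne_of_gt ht))).continuousWithinAt

lemma zzsf_norm_le {t : ℝ} (ht : 0 < t) (w : ℂ) :
    ‖zzsf_psi t * (t : ℂ) ^ w‖ ≤ t ^ w.re := by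
  rw [norm_mul, norm_cpow_eq_rpow_re_of_pos ht]
  have h1 : ‖zzsf_psi t‖ ≤ 1 := by
    rw [Complex.norm_real, Real.norm_eq_abs, abs_le]
    have := Int.fract_nonneg t
    have := Int.fract_lt_one t
    constructor <;> linarith
  calc ‖zzsf_psi t‖ * t ^ w.re ≤ 1 * t ^ w.re := by
        exact mul_le_mul_of_nonneg_right h1 (Real.rpow_nonneg ht.le _)
    _ = t ^ w.re := one_mul _

lemma zzsf_integrable {x : ℝ} (hx : 0 < x) {s : ℂ} (hs : 0 < s.re) :
    IntegrableOn (fun t : ℝ => zzsf_psi t * (t : ℂ) ^ (-s - 1)) (Ioi x) := by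
  refine Integrable.mono' (g := fun t : ℝ => t ^ (-s.re - 1))
    (integrableOn_Ioi_rpow_of_lt (by linarith) hx) ?_ ?_
  · exact ((zzsf_meas (-s-1)).mono_measure
      (Measure.restrict_mono (Ioi_subset_Ioi hx.le) le_rfl))
  · filter_upwards [ae_restrict_mem measurableSet_Ioi] with t ht
    have h := zzsf_norm_le (hx.trans ht) (-s-1)
    simpa using h

lemma zzsf_mellin_eq {x : ℝ} (hx : 0 < x) (s : ℂ) :
    ∫ t in Ioi x, zzsf_psi t * (t : ℂ) ^ (-s - 1)
      = mellin ((Ioi x).indicator zzsf_psi) (-s) := by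
  rw [mellin]
  have h1 : Ioi (0:ℝ) ∩ Ioi x = Ioi x := by
    rw [inter_eq_right]; exact Ioi_subset_Ioi hx.le
  rw [show (fun t : ℝ => (t:ℂ) ^ (-s - 1) • (Ioi x).indicator zzsf_psi t)
      = fun t : ℝ => (Ioi x).indicator (fun t => (t:ℂ) ^ (-s - 1) * zzsf_psi t) t by
    funext t
    simp [Set.indicator_apply]]
  rw [setIntegral_indicator measurableSet_Ioi, h1]
  congr 1; funext t; ring

lemma zzsf_diff {x : ℝ} (hx : 0 < x) {s₀ : ℂ} (hs : 0 < s₀.re) :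
    DifferentiableAt ℂ
      (fun s : ℂ => ∫ t in Ioi x, zzsf_psi t * (t : ℂ) ^ (-s - 1)) s₀ := by
  have heq : (fun s : ℂ => ∫ t in Ioi x, zzsf_psi t * (t : ℂ) ^ (-s - 1))
      = fun s : ℂ => mellin ((Ioi x).indicator zzsf_psi) (-s) := by
    funext s; exact zzsf_mellin_eq hx s
  rw [heq]
  have hnormle : ∀ t : ℝ, ‖(Ioi x).indicator zzsf_psi t‖ ≤ 1 := by
    intro t
    rw [Set.indicator_apply]
    split
    · rw [Complex.norm_real, Real.norm_eq_abs, abs_le]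
      have := Int.fract_nonneg t
      have := Int.fract_lt_one t
      constructor <;> linarith
    · simp
  have hmeas : AEStronglyMeasurable ((Ioi x).indicator zzsf_psi) volume := by
    exact ((Complex.measurable_ofReal.comp
      (measurable_fract.sub measurable_const)).indicator measurableSet_Ioi).aestronglyMeasurable
  have hfc : LocallyIntegrableOn ((Ioi x).indicator zzsf_psi) (Ioi 0) volume := by
    intro t ht
    have ht' : (0:ℝ) < t := ht
    refine ⟨Ioo (t/2) (t+1), mem_nhdsWithin_of_mem_nhds
      (isOpen_Ioo.mem_nhds ⟨by linarith, by linarith⟩), ?_⟩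
    refine Measure.integrableOn_of_bounded (M := 1) measure_Ioo_lt_top.ne
      hmeas (ae_of_all _ fun a => hnormle a)
  have hf_top : ((Ioi x).indicator zzsf_psi) =O[atTop] (· ^ (-(0:ℝ))) := by
    rw [Asymptotics.isBigO_iff]
    refine ⟨1, ?_⟩
    filter_upwards [eventually_ge_atTop (1:ℝ)] with t ht
    rw [Real.rpow_neg (by linarith), Real.rpow_zero]
    simpa using hnormle t
  have hf_bot : ((Ioi x).indicator zzsf_psi) =O[nhdsWithin 0 (Ioi 0)]
      (· ^ (-(-s₀.re - 1))) := by
    rw [Asymptotics.isBigO_iff]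
    refine ⟨1, ?_⟩
    filter_upwards [Ioo_mem_nhdsGT_of_mem (left_mem_Ico.mpr hx)] with t ht
    rw [Set.indicator_of_notMem (Set.notMem_Ioi.mpr ht.2.le)]
    simp
  have := mellin_differentiableAt_of_isBigO_rpow (s := -s₀) hfc hf_top
    (by simp only [neg_re]; linarith) hf_bot (by simp only [neg_re]; linarith)
  exact this.comp s₀ (differentiable_neg s₀)

lemma zzsf_interval {n : ℕ} {a b : ℝ} (ha : 0 < a) (hab : a ≤ b) (hna : (n : ℝ) ≤ a)
    (hbn : b ≤ n + 1) {s : ℂ} (hs0 : s ≠ 0) (hs1 : s ≠ 1) :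
    ∫ t in a..b, zzsf_psi t * (t : ℂ) ^ (-s - 1)
      = ((b : ℂ) ^ (1 - s) - (a : ℂ) ^ (1 - s)) / (1 - s)
        + ((n : ℂ) + 1/2) * ((b : ℂ) ^ (-s) - (a : ℂ) ^ (-s)) / s := by
  have hzero : (0:ℝ) ∉ Set.uIcc a b := by
    rw [Set.uIcc_of_le hab]
    exact fun h => absurd h.1 (by linarith)
  have hae : ∀ᵐ t : ℝ, t ≠ (n:ℝ) + 1 := by
    rw [ae_iff]
    simp only [not_not, Set.setOf_eq_eq_singleton]
    exact Real.volume_singleton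
  have hcongr : ∫ t in a..b, zzsf_psi t * (t:ℂ)^(-s-1)
      = ∫ t in a..b, ((t:ℂ)^(-s) - ((n:ℂ)+1/2) * (t:ℂ)^(-s-1)) := by
    apply intervalIntegral.integral_congr_ae
    filter_upwards [hae] with t htne htmem
    rw [Set.uIoc_of_le hab] at htmem
    have h1 : (n:ℝ) ≤ t := le_trans hna htmem.1.le
    have h2 : t < (n:ℝ) + 1 := lt_of_le_of_ne (le_trans htmem.2 hbn) htne
    have hfr : Int.fract t = t - n := by
      rw [Int.fract, show ⌊t⌋ = (n:ℤ) from Int.floor_eq_iff.mpr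
        ⟨by exact_mod_cast h1, by exact_mod_cast h2⟩]
      simp
    have ht0 : (t:ℂ) ≠ 0 := ofReal_ne_zero.mpr (ne_of_gt (by linarith [htmem.1]))
    have hts := cpow_add (1:ℂ) (-s-1) ht0
    rw [show (1:ℂ) + (-s-1) = -s by ring, cpow_one] at hts
    rw [zzsf_psi, hfr, hts]
    push_cast
    ring
  rw [hcongr, intervalIntegral.integral_sub
      (intervalIntegral.intervalIntegrable_cpow (Or.inr hzero))
      ((intervalIntegral.intervalIntegrable_cpow (Or.inr hzero)).const_mul _),
    intervalIntegral.integral_const_mul,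
    integral_cpow (Or.inr ⟨by intro h; apply hs1; linear_combination -h, hzero⟩),
    integral_cpow (Or.inr ⟨by intro h; apply hs0; linear_combination -h, hzero⟩)]
  rw [show -s + 1 = 1 - s by ring, show -s - 1 + 1 = -s by ring]
  have h1s : (1:ℂ) - s ≠ 0 := sub_ne_zero_of_ne (Ne.symm hs1)
  field_simp
  ring

lemma zzsf_J {x : ℝ} (hx : 0 < x) {s : ℂ} (hs : 0 < s.re) (hs1 : s ≠ 1) :
    ∀ N : ℕ, ⌊x⌋₊ + 1 ≤ N →
    ∫ t in x..(N:ℝ), zzsf_psi t * (t:ℂ)^(-s-1)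
      = ((N:ℂ)^((1:ℂ)-s) - (x:ℂ)^((1:ℂ)-s)) / (1-s)
        + (((⌊x⌋₊:ℂ) + 1/2) * (-(x:ℂ)^(-s)) + ((N:ℂ) - 1/2) * (N:ℂ)^(-s)) / s
        - (1/s) * ∑ k ∈ Finset.Ico (⌊x⌋₊ + 1) N, (k:ℂ)^(-s) := by
  have hs0 : s ≠ 0 := fun h => by simp [h] at hs
  have hxm : x < (⌊x⌋₊:ℝ) + 1 := Nat.lt_floor_add_one x
  have hintOn : IntegrableOn (fun t : ℝ => zzsf_psi t * (t : ℂ) ^ (-s - 1)) (Ioi x) :=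
    zzsf_integrable hx hs
  refine Nat.le_induction ?_ ?_
  · -- base case N = ⌊x⌋₊ + 1
    have hb : x ≤ ((⌊x⌋₊ + 1 : ℕ) : ℝ) := by push_cast; linarith
    have h := zzsf_interval (n := ⌊x⌋₊) hx hb (Nat.floor_le hx.le)
      (by push_cast; exact le_rfl) hs0 hs1
    rw [h, Finset.Ico_self, Finset.sum_empty]
    push_cast
    ring
  · -- inductive step
    intro N hN ih
    have hxN : x ≤ (N:ℝ) := by
      calc x ≤ (⌊x⌋₊:ℝ) + 1 := hxm.le
        _ ≤ (N:ℝ) := by exact_mod_cast hN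
    have hN0 : (0:ℝ) < (N:ℝ) := lt_of_lt_of_le hx hxN
    have hi1 : IntervalIntegrable (fun t : ℝ => zzsf_psi t * (t:ℂ)^(-s-1)) volume x (N:ℝ) := by
      rw [intervalIntegrable_iff_integrableOn_Ioc_of_le hxN]
      exact hintOn.mono_set Ioc_subset_Ioi_self
    have hi2 : IntervalIntegrable (fun t : ℝ => zzsf_psi t * (t:ℂ)^(-s-1)) volume
        (N:ℝ) ((N:ℝ)+1) := by
      rw [intervalIntegrable_iff_integrableOn_Ioc_of_le (by linarith)]
      exact hintOn.mono_set (fun t ht => lt_of_le_of_lt hxN ht.1)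
    have hadd := intervalIntegral.integral_add_adjacent_intervals hi1 hi2
    have hseg := zzsf_interval (n := N) hN0 (by linarith : (N:ℝ) ≤ (N:ℝ)+1)
      le_rfl le_rfl hs0 hs1
    have hcast : (((N:ℕ)+1 : ℕ) : ℝ) = (N:ℝ) + 1 := by push_cast; ring
    rw [hcast, ← hadd, ih, hseg, Finset.sum_Ico_succ_top hN]
    push_cast
    ring

lemma zzsf_zeta_eq {x : ℝ} (hx : 0 < x) {s : ℂ} (hs : 1 < s.re) :
    (1 - s) * riemannZeta s
      = (1 - s) * (∑ n ∈ Finset.Icc 1 ⌊x⌋₊, (n:ℂ)^(-s))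
        - (1 - s) * ((⌊x⌋₊:ℂ) + 1/2) * (x:ℂ)^(-s)
        - s * (x:ℂ)^((1:ℂ)-s)
        - (1 - s) * s * ∫ t in Ioi x, zzsf_psi t * (t:ℂ)^(-s-1) := by
  have hs' : 0 < s.re := by linarith
  have hs0 : s ≠ 0 := fun h => by simp [h] at hs'
  have hs1 : s ≠ 1 := fun h => by simp [h] at hs
  have h1s : (1:ℂ) - s ≠ 0 := sub_ne_zero_of_ne (Ne.symm hs1)
  set m : ℕ := ⌊x⌋₊ + 1 with hm
  set Sm : ℂ := ∑ n ∈ Finset.Icc 1 ⌊x⌋₊, (n:ℂ)^(-s) with hSm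
  set c : ℂ := (⌊x⌋₊:ℂ) + 1/2 with hc
  set I₀ : ℂ := ∫ t in Ioi x, zzsf_psi t * (t:ℂ)^(-s-1) with hI₀
  have hintOn : IntegrableOn (fun t : ℝ => zzsf_psi t * (t : ℂ) ^ (-s - 1)) (Ioi x) :=
    zzsf_integrable hx hs'
  -- limit of interval integrals
  have hJ : Tendsto (fun N : ℕ => ∫ t in x..(N:ℝ), zzsf_psi t * (t:ℂ)^(-s-1)) atTop
      (nhds (∫ t in Ioi x, zzsf_psi t * (t:ℂ)^(-s-1))) :=
    intervalIntegral_tendsto_integral_Ioi x hintOn tendsto_natCast_atTop_atTop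
  -- limit of N ^ (1-s)
  have hT1 : Tendsto (fun N : ℕ => ((N:ℂ))^((1:ℂ)-s)) atTop (nhds 0) := by
    apply squeeze_zero_norm' (a := fun N : ℕ => ((N:ℝ))^(1-s.re))
    · filter_upwards [eventually_ge_atTop 1] with N hN
      have hN0 : (0:ℝ) < (N:ℝ) := by exact_mod_cast hN
      rw [show ((N:ℕ):ℂ) = (((N:ℝ)):ℂ) by push_cast; rfl]
      rw [norm_cpow_eq_rpow_re_of_pos hN0]
      simp
    · have := tendsto_rpow_neg_atTop (by linarith : 0 < s.re - 1)
      rw [show -(s.re - 1) = 1 - s.re by ring] at this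
      exact this.comp tendsto_natCast_atTop_atTop
  -- limit of (N - 1/2) * N ^ (-s)
  have hT2 : Tendsto (fun N : ℕ => ((N:ℂ) - 1/2) * (N:ℂ)^(-s)) atTop (nhds 0) := by
    apply squeeze_zero_norm' (a := fun N : ℕ => ((N:ℝ))^(1-s.re))
    · filter_upwards [eventually_ge_atTop 1] with N hN
      have hN0 : (0:ℝ) < (N:ℝ) := by exact_mod_cast hN
      have hN1 : (1:ℝ) ≤ (N:ℝ) := by exact_mod_cast hN
      rw [norm_mul, show ((N:ℕ):ℂ) = (((N:ℝ)):ℂ) by push_cast; rfl,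
        norm_cpow_eq_rpow_re_of_pos hN0,
        show (((N:ℝ)):ℂ) - 1/2 = (((N:ℝ) - 1/2 : ℝ):ℂ) by push_cast; ring,
        Complex.norm_real, neg_re]
      have h1 : ‖(N:ℝ) - 1/2‖ ≤ (N:ℝ) := by
        rw [Real.norm_eq_abs, abs_le]; constructor <;> linarith
      calc ‖(N:ℝ) - 1/2‖ * (N:ℝ) ^ (-s.re) ≤ (N:ℝ) * (N:ℝ) ^ (-s.re) := by
            exact mul_le_mul_of_nonneg_right h1 (Real.rpow_nonneg hN0.le _)
        _ = (N:ℝ) ^ (1 - s.re) := by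
            rw [show (1:ℝ) - s.re = 1 + (-s.re) by ring, Real.rpow_add hN0,
              Real.rpow_one]
    · have := tendsto_rpow_neg_atTop (by linarith : 0 < s.re - 1)
      rw [show -(s.re - 1) = 1 - s.re by ring] at this
      exact this.comp tendsto_natCast_atTop_atTop
  -- partial sums tend to ζ s - Sm
  have hsummable : Summable (fun n : ℕ => (n:ℂ)^(-s)) := by
    have := Complex.summable_one_div_nat_cpow.mpr hs
    refine this.congr fun n => ?_
    rw [cpow_neg, one_div]
  have hzeta : HasSum (fun n : ℕ => (n:ℂ)^(-s)) (riemannZeta s) := by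
    have h := zeta_eq_tsum_one_div_nat_cpow hs
    have h2 : riemannZeta s = ∑' n : ℕ, (n:ℂ)^(-s) := by
      rw [h]; congr 1; funext n; rw [cpow_neg, one_div]
    rw [h2]
    exact hsummable.hasSum
  have hhead : ∑ k ∈ Finset.range m, (k:ℂ)^(-s) = Sm := by
    rw [show Finset.range m = insert 0 (Finset.Icc 1 ⌊x⌋₊) by
      ext k; simp [hm, Nat.lt_succ_iff]; omega]
    rw [Finset.sum_insert (by simp)]
    rw [show ((0:ℕ):ℂ) = 0 by simp, Complex.zero_cpow (neg_ne_zero.mpr hs0), zero_add]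
  have hT3 : Tendsto (fun N : ℕ => ∑ k ∈ Finset.Ico m N, (k:ℂ)^(-s)) atTop
      (nhds (riemannZeta s - Sm)) := by
    have h1 := hzeta.tendsto_sum_nat
    have h2 : Tendsto (fun N : ℕ => (∑ k ∈ Finset.range N, (k:ℂ)^(-s)) - Sm) atTop
        (nhds (riemannZeta s - Sm)) := h1.sub_const _
    refine h2.congr' ?_
    filter_upwards [eventually_ge_atTop m] with N hN
    rw [← hhead, eq_comm, Finset.sum_Ico_eq_sub _ hN]
  -- limit of the RHS of zzsf_J
  have hRHS : Tendsto (fun N : ℕ =>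
      ((N:ℂ)^((1:ℂ)-s) - (x:ℂ)^((1:ℂ)-s)) / (1-s)
        + (c * (-(x:ℂ)^(-s)) + ((N:ℂ) - 1/2) * (N:ℂ)^(-s)) / s
        - (1/s) * ∑ k ∈ Finset.Ico m N, (k:ℂ)^(-s)) atTop
      (nhds ((0 - (x:ℂ)^((1:ℂ)-s)) / (1-s) + (c * (-(x:ℂ)^(-s)) + 0) / s
        - (1/s) * (riemannZeta s - Sm))) := by
    exact (((hT1.sub_const _).div_const _).add
      ((tendsto_const_nhds.add hT2).div_const _)).sub (hT3.const_mul _)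
  have hJeq : ∀ᶠ N : ℕ in atTop, (∫ t in x..(N:ℝ), zzsf_psi t * (t:ℂ)^(-s-1))
      = ((N:ℂ)^((1:ℂ)-s) - (x:ℂ)^((1:ℂ)-s)) / (1-s)
        + (c * (-(x:ℂ)^(-s)) + ((N:ℂ) - 1/2) * (N:ℂ)^(-s)) / s
        - (1/s) * ∑ k ∈ Finset.Ico m N, (k:ℂ)^(-s) := by
    filter_upwards [eventually_ge_atTop m] with N hN
    exact zzsf_J hx hs' hs1 N hN
  have hIL := tendsto_nhds_unique (hJ.congr' hJeq) hRHS
  -- now rearrange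
  rw [← hI₀] at hIL
  have key : s * ((1 - s) * riemannZeta s)
      = s * ((1 - s) * Sm - (1 - s) * c * (x:ℂ)^(-s) - s * (x:ℂ)^((1:ℂ)-s)
          - (1 - s) * s * I₀) := by
    field_simp at hIL
    linear_combination s * hIL
  exact mul_left_cancel₀ hs0 key

lemma zzsf_main {x : ℝ} (hx : 0 < x) {s : ℂ} (hs0 : 0 < s.re) (hsne : s ≠ 1) :
    (1 - s) * riemannZeta s
      = (1 - s) * (∑ n ∈ Finset.Icc 1 ⌊x⌋₊, (n:ℂ)^(-s))
        - (1 - s) * ((⌊x⌋₊:ℂ) + 1/2) * (x:ℂ)^(-s)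
        - s * (x:ℂ)^((1:ℂ)-s)
        - (1 - s) * s * ∫ t in Ioi x, zzsf_psi t * (t:ℂ)^(-s-1) := by
  have hx0 : (x:ℂ) ≠ 0 := ofReal_ne_zero.mpr hx.ne'
  set U : Set ℂ := {z : ℂ | 0 < z.re} ∩ {(1:ℂ)}ᶜ with hU
  have hUopen : IsOpen U :=
    (isOpen_lt continuous_const Complex.continuous_re).inter isClosed_singleton.isOpen_compl
  -- preconnectedness of U
  have hUpre : IsPreconnected U := by
    set A : Set ℂ := {z : ℂ | 0 < z.re} ∩ {z : ℂ | z.re < 1} with hA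
    set B : Set ℂ := {z : ℂ | 0 < z.re} ∩ {z : ℂ | 0 < z.im} with hB
    set C : Set ℂ := {z : ℂ | 1 < z.re} with hC
    set D : Set ℂ := {z : ℂ | 0 < z.re} ∩ {z : ℂ | z.im < 0} with hD
    have hApre : IsPreconnected A :=
      ((convex_halfSpace_re_gt 0).inter (convex_halfSpace_re_lt 1)).isPreconnected
    have hBpre : IsPreconnected B :=
      ((convex_halfSpace_re_gt 0).inter (convex_halfSpace_im_gt 0)).isPreconnected
    have hCpre : IsPreconnected C := (convex_halfSpace_re_gt 1).isPreconnected
    have hDpre : IsPreconnected D :=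
      ((convex_halfSpace_re_gt 0).inter (convex_halfSpace_im_lt 0)).isPreconnected
    have hAB : IsPreconnected (A ∪ B) := by
      apply hApre.union (⟨1/2, 1/2⟩ : ℂ) ?_ ?_ hBpre
      · exact ⟨by norm_num, by norm_num⟩
      · exact ⟨by norm_num, by norm_num⟩
    have hABC : IsPreconnected (A ∪ B ∪ C) := by
      apply hAB.union (⟨2, 1⟩ : ℂ) ?_ ?_ hCpre
      · exact Or.inr ⟨by norm_num, by norm_num⟩
      · exact (by norm_num : (1:ℝ) < 2)
    have hABCD : IsPreconnected (A ∪ B ∪ C ∪ D) := by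
      apply hABC.union (⟨1/2, -1/2⟩ : ℂ) ?_ ?_ hDpre
      · exact Or.inl (Or.inl ⟨by norm_num, by norm_num⟩)
      · exact ⟨by norm_num, by norm_num⟩
    have hUeq : U = A ∪ B ∪ C ∪ D := by
      ext z
      simp only [hU, hA, hB, hC, hD, Set.mem_inter_iff, Set.mem_union, Set.mem_setOf_eq,
        Set.mem_compl_iff, Set.mem_singleton_iff]
      constructor
      · rintro ⟨hre, hne⟩
        rcases lt_trichotomy z.im 0 with him | him | him
        · exact Or.inr ⟨hre, him⟩
        · rcases lt_trichotomy z.re 1 with h1 | h1 | h1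
          · exact Or.inl (Or.inl (Or.inl ⟨hre, h1⟩))
          · exact absurd (Complex.ext h1 him) hne
          · exact Or.inl (Or.inr h1)
        · exact Or.inl (Or.inl (Or.inr ⟨hre, him⟩))
      · rintro ((( ⟨h1, h2⟩ | ⟨h1, h2⟩) | h1) | ⟨h1, h2⟩)
        · exact ⟨h1, fun h => by simp [h] at h2⟩
        · exact ⟨h1, fun h => by simp [h] at h2⟩
        · exact ⟨by linarith, fun h => by simp [h] at h1⟩
        · exact ⟨h1, fun h => by simp [h] at h2⟩
    rw [hUeq]
    exact hABCD
  -- the two analytic functions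
  have hfana : AnalyticOnNhd ℂ (fun z : ℂ => (1 - z) * riemannZeta z) U := by
    refine DifferentiableOn.analyticOnNhd (fun z hz => ?_) hUopen
    exact (((differentiableAt_const 1).sub differentiableAt_id).mul
      (differentiableAt_riemannZeta hz.2)).differentiableWithinAt
  have hgana : AnalyticOnNhd ℂ (fun z : ℂ =>
      (1 - z) * (∑ n ∈ Finset.Icc 1 ⌊x⌋₊, (n:ℂ)^(-z))
        - (1 - z) * ((⌊x⌋₊:ℂ) + 1/2) * (x:ℂ)^(-z)
        - z * (x:ℂ)^((1:ℂ)-z)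
        - (1 - z) * z * ∫ t in Ioi x, zzsf_psi t * (t:ℂ)^(-z-1)) U := by
    refine DifferentiableOn.analyticOnNhd (fun z hz => DifferentiableAt.differentiableWithinAt ?_)
      hUopen
    have h1z : DifferentiableAt ℂ (fun z : ℂ => (1:ℂ) - z) z :=
      (differentiableAt_const 1).sub differentiableAt_id
    have hSn : DifferentiableAt ℂ (fun z : ℂ => ∑ n ∈ Finset.Icc 1 ⌊x⌋₊, (n:ℂ)^(-z)) z := by
      refine DifferentiableAt.fun_sum fun n hn => ?_
      refine DifferentiableAt.const_cpow differentiableAt_id.neg (Or.inl ?_)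
      have : 1 ≤ n := (Finset.mem_Icc.mp hn).1
      exact_mod_cast Nat.cast_ne_zero.mpr (by omega)
    have hX0 : DifferentiableAt ℂ (fun z : ℂ => (x:ℂ)^(-z)) z :=
      DifferentiableAt.const_cpow differentiableAt_id.neg (Or.inl hx0)
    have hX1 : DifferentiableAt ℂ (fun z : ℂ => (x:ℂ)^((1:ℂ)-z)) z :=
      DifferentiableAt.const_cpow h1z (Or.inl hx0)
    have hI := zzsf_diff hx hz.1
    exact (((h1z.mul hSn).sub ((h1z.mul (differentiableAt_const _)).mul hX0)).sub
      (differentiableAt_id.mul hX1)).sub ((h1z.mul differentiableAt_id).mul hI)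
  have h2U : (2:ℂ) ∈ U := by
    constructor
    · show (0:ℝ) < (2:ℂ).re
      norm_num
    · norm_num
  have hev : (fun z : ℂ => (1 - z) * riemannZeta z) =ᶠ[nhds 2] (fun z : ℂ =>
      (1 - z) * (∑ n ∈ Finset.Icc 1 ⌊x⌋₊, (n:ℂ)^(-z))
        - (1 - z) * ((⌊x⌋₊:ℂ) + 1/2) * (x:ℂ)^(-z)
        - z * (x:ℂ)^((1:ℂ)-z)
        - (1 - z) * z * ∫ t in Ioi x, zzsf_psi t * (t:ℂ)^(-z-1)) := by
    have hopen : IsOpen {z : ℂ | 1 < z.re} := isOpen_lt continuous_const Complex.continuous_re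
    refine Filter.eventually_of_mem (hopen.mem_nhds ?_) (fun z hz => zzsf_zeta_eq hx hz)
    show (1:ℝ) < (2:ℂ).re
    norm_num
  exact hfana.eqOn_of_preconnected_of_eventuallyEq hgana hUpre h2U hev ⟨hs0, hsne⟩

theorem zeta_zero_sawtooth_formula (s : ℂ) (hs0 : 0 < s.re) (hs1 : s.re < 1)
    (x : ℝ) (hx : 0 < x) (hzero : riemannZeta s = 0) :
    (x : ℂ) ^ (s - 1) * (∑ n ∈ Finset.Icc 1 ⌊x⌋₊, (n : ℂ) ^ (-s)) - 1 / (1 - s)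
      = -((Int.fract x - 1/2 : ℝ) : ℂ) * (x : ℂ)⁻¹
        + s * (x : ℂ) ^ (s - 1)
          * ∫ t in Set.Ioi x, ((Int.fract t - 1/2 : ℝ) : ℂ) * (t : ℂ) ^ (-s - 1) := by
  have hsne : s ≠ 1 := fun h => by simp [h] at hs1
  have h1s : (1:ℂ) - s ≠ 0 := sub_ne_zero_of_ne (Ne.symm hsne)
  have hx0 : (x:ℂ) ≠ 0 := ofReal_ne_zero.mpr hx.ne'
  have hA := zzsf_main hx hs0 hsne
  rw [hzero, mul_zero] at hA
  have e1 : (x:ℂ)^(s-1) * (x:ℂ)^(-s) = (x:ℂ)⁻¹ := by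
    rw [← cpow_add _ _ hx0, show s - 1 + -s = -1 by ring, cpow_neg_one]
  have e2 : (x:ℂ)^(s-1) * (x:ℂ)^((1:ℂ)-s) = 1 := by
    rw [← cpow_add _ _ hx0, show s - 1 + ((1:ℂ)-s) = 0 by ring, cpow_zero]
  have e4 : (x:ℂ) * (x:ℂ)⁻¹ = 1 := mul_inv_cancel₀ hx0
  have h5 : (1 - s) * (1/(1-s)) = 1 := by field_simp
  have e3 : ((Int.fract x - 1/2 : ℝ) : ℂ) = (x:ℂ) - (⌊x⌋₊:ℂ) - 1/2 := by
    rw [Int.fract]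
    push_cast [← Int.natCast_floor_eq_floor hx.le]
    ring
  rw [e3]
  apply mul_left_cancel₀ h1s
  linear_combination (-((x:ℂ)^(s-1))) * hA + ((1-s)*((⌊x⌋₊:ℂ) + 1/2)) * e1 + s * e2
    + (1-s) * e4 + (-1) * h5
end

section
/- For every s ∈ ℂ with 0 < Re(s) < 1 and x ≥ 1: ∑_{n ≤ x} n^{-s} = ζ(s) + x^{1-s}/(1−s) − ψ(x)·x^{-s} + s·∫_x^∞ ψ(t)·t^{-s-1} dt, where ψ(t) = {t} − 1/2. -/
open MeasureTheory Complex

open Set Filter Topology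

noncomputable def saw (t : ℝ) : ℂ := ((Int.fract t - 1/2 : ℝ) : ℂ)

lemma saw_norm_le (t : ℝ) : ‖saw t‖ ≤ 1/2 := by
  rw [saw, Complex.norm_real, Real.norm_eq_abs, abs_le]
  constructor
  · linarith [Int.fract_nonneg t]
  · linarith [Int.fract_lt_one t]

lemma saw_meas : Measurable saw :=
  Complex.measurable_ofReal.comp ((measurable_fract).sub measurable_const)

lemma cpow_meas (c : ℂ) : Measurable (fun t : ℝ => (t:ℂ) ^ c) :=
  (Complex.measurable_ofReal).pow measurable_const

lemma norm_real_cpow {t : ℝ} (ht : 0 < t) (c : ℂ) : ‖(t:ℂ) ^ c‖ = t ^ c.re := by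
  rw [Complex.norm_cpow_eq_rpow_re_of_pos ht]

lemma hasDerivAt_real_cpow' {t : ℝ} (ht : 0 < t) (c : ℂ) :
    HasDerivAt (fun u : ℝ => (u:ℂ) ^ c) (c * (t:ℂ) ^ (c-1)) t := by
  have hsl : (t:ℂ) ∈ Complex.slitPlane := by
    rw [Complex.mem_slitPlane_iff]; left; simpa using ht
  exact (Complex.hasStrictDerivAt_cpow_const hsl).hasDerivAt.comp_ofReal

lemma integrableOn_saw_Ioi (s : ℂ) (hs : 0 < s.re) {a : ℝ} (ha : 0 < a) :
    IntegrableOn (fun t => saw t * (t:ℂ) ^ (-s-1)) (Ioi a) := by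
  have hmeas : AEStronglyMeasurable (fun t => saw t * (t:ℂ) ^ (-s-1))
      (volume.restrict (Ioi a)) := (saw_meas.mul (cpow_meas _)).aestronglyMeasurable
  refine Integrable.mono' (g := fun t => (1/2) * t ^ (-s.re - 1)) ?_ hmeas ?_
  · exact (integrableOn_Ioi_rpow_of_lt (by linarith) ha).const_mul _
  · filter_upwards [ae_restrict_mem measurableSet_Ioi] with t ht
    have ht0 : 0 < t := lt_trans ha ht
    rw [norm_mul, norm_real_cpow ht0]
    have h2 : ((-s-1).re) = -s.re - 1 := by simp
    rw [h2]
    exact mul_le_mul_of_nonneg_right (saw_norm_le t) (Real.rpow_nonneg ht0.le _)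

lemma floor_cast_complex {t : ℝ} (ht : 0 ≤ t) : ((⌊t⌋₊ : ℕ) : ℂ) = (t:ℂ) - saw t - 1/2 := by
  have h1 : ((⌊t⌋₊ : ℕ) : ℝ) = t - Int.fract t := by
    rw [Int.self_sub_fract, ← Int.natCast_floor_eq_floor ht]
    push_cast
    ring
  rw [saw]
  have h2 : ((⌊t⌋₊ : ℕ) : ℂ) = (((⌊t⌋₊ : ℕ) : ℝ) : ℂ) := by push_cast; ring
  rw [h2, h1]
  push_cast
  ring

lemma abel_id (s : ℂ) (hs0 : 0 < s.re) (hs1 : s ≠ 1) (x : ℝ) (hx : 1 ≤ x) :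
    ∑ n ∈ Finset.Icc 1 ⌊x⌋₊, (n : ℂ) ^ (-s)
      = (1/2 + 1/(s-1) - s * ∫ t in Ioi (1:ℝ), saw t * (t:ℂ)^(-s-1))
        + (x:ℂ)^(1-s)/(1-s) - saw x * (x:ℂ)^(-s)
        + s * ∫ t in Ioi x, saw t * (t:ℂ)^(-s-1) := by
  have hs0' : s ≠ 0 := fun h => by simp [h] at hs0
  have hx0 : (0:ℝ) < x := lt_of_lt_of_le one_pos hx
  set f : ℝ → ℂ := fun t => (t:ℂ)^(-s) with hf
  set c : ℕ → ℂ := fun n => if n = 0 then 0 else 1 with hc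
  have hderiv : ∀ t : ℝ, 0 < t → HasDerivAt f (-s * (t:ℂ)^(-s-1)) t := by
    intro t ht
    have h := hasDerivAt_real_cpow' ht (-s)
    convert h using 2
  have hdiff : ∀ t ∈ Icc (1:ℝ) x, DifferentiableAt ℝ f t :=
    fun t ht => (hderiv t (by linarith [ht.1])).differentiableAt
  have hderiv_eq : ∀ t : ℝ, 0 < t → deriv f t = -s * (t:ℂ)^(-s-1) :=
    fun t ht => (hderiv t ht).deriv
  have hcont : ∀ (r : ℂ), ContinuousOn (fun t : ℝ => (t:ℂ)^r) (Icc 1 x) := by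
    intro r t ht
    exact (hasDerivAt_real_cpow' (by linarith [ht.1] : (0:ℝ) < t) r).continuousAt.continuousWithinAt
  have hf_int : IntegrableOn (deriv f) (Icc 1 x) := by
    have h1 : IntegrableOn (fun t : ℝ => -s * (t:ℂ)^(-s-1)) (Icc 1 x) :=
      ((continuousOn_const.mul (hcont (-s-1)))).integrableOn_compact isCompact_Icc
    exact h1.congr_fun (fun t ht => (hderiv_eq t (by linarith [ht.1])).symm) measurableSet_Icc
  have key := sum_mul_eq_sub_integral_mul₀ c (by simp [hc]) x hdiff hf_int
  have csum : ∀ n : ℕ, ∑ k ∈ Finset.Icc 0 n, c k = (n:ℂ) := by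
    intro n
    induction n with
    | zero => simp [hc]
    | succ n ih =>
        rw [Finset.sum_Icc_succ_top (Nat.zero_le _), ih]
        simp [hc]
  have lhs_eq : ∑ k ∈ Finset.Icc 0 ⌊x⌋₊, f k * c k = ∑ n ∈ Finset.Icc 1 ⌊x⌋₊, (n:ℂ)^(-s) := by
    rw [Finset.Icc_eq_cons_Ioc (Nat.zero_le _), Finset.sum_cons]
    have h1 : Finset.Ioc 0 ⌊x⌋₊ = Finset.Icc 1 ⌊x⌋₊ := by rw [← Finset.Icc_add_one_left_eq_Ioc, zero_add]
    rw [h1]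
    have h2 : c 0 = 0 := by simp [hc]
    rw [h2, mul_zero, zero_add]
    refine Finset.sum_congr rfl fun k hk => ?_
    have hk0 : k ≠ 0 := by have := (Finset.mem_Icc.mp hk).1; omega
    simp [hc, hk0, hf]
  have IntA : IntegrableOn (fun t : ℝ => (t:ℂ)^(-s)) (Ioc 1 x) :=
    ((hcont (-s)).integrableOn_compact isCompact_Icc).mono_set Ioc_subset_Icc_self
  have IntC : IntegrableOn (fun t : ℝ => (t:ℂ)^(-s-1)) (Ioc 1 x) :=
    ((hcont (-s-1)).integrableOn_compact isCompact_Icc).mono_set Ioc_subset_Icc_self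
  have IntB : IntegrableOn (fun t => saw t * (t:ℂ)^(-s-1)) (Ioc 1 x) :=
    (integrableOn_saw_Ioi s hs0 one_pos).mono_set Set.Ioc_subset_Ioi_self
  have IntTail : IntegrableOn (fun t => saw t * (t:ℂ)^(-s-1)) (Ioi x) :=
    integrableOn_saw_Ioi s hs0 hx0
  have hne1 : (1:ℂ) - s ≠ 0 := sub_ne_zero_of_ne (fun h => hs1 h.symm)
  have hne1' : s - (1:ℂ) ≠ 0 := sub_ne_zero_of_ne hs1
  have h0uIcc : (0:ℝ) ∉ uIcc 1 x := by
    rw [uIcc_of_le hx]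
    exact fun h => absurd h.1 (by norm_num)
  have I1 : ∫ t in Ioc 1 x, (t:ℂ)^(-s) = ((x:ℂ)^(1-s) - 1)/(1-s) := by
    rw [← intervalIntegral.integral_of_le hx,
      integral_cpow (Or.inr ⟨by simpa using hs1, h0uIcc⟩)]
    rw [(show -s + 1 = 1 - s by ring)]
    norm_num
  have I2 : ∫ t in Ioc 1 x, (t:ℂ)^(-s-1) = ((x:ℂ)^(-s) - 1)/(-s) := by
    rw [← intervalIntegral.integral_of_le hx,
      integral_cpow (Or.inr ⟨by simpa [sub_eq_neg_self] using hs0', h0uIcc⟩)]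
    rw [(show -s - 1 + 1 = -s by ring)]
    norm_num
  have hsplit : (∫ t in Ioi (1:ℝ), saw t * (t:ℂ)^(-s-1))
      = (∫ t in Ioc 1 x, saw t * (t:ℂ)^(-s-1)) + ∫ t in Ioi x, saw t * (t:ℂ)^(-s-1) := by
    rw [← Ioc_union_Ioi_eq_Ioi hx]
    exact setIntegral_union (Set.Ioc_disjoint_Ioi le_rfl) measurableSet_Ioi IntB IntTail
  have hIeq : (∫ t in Ioc 1 x, deriv f t * (∑ k ∈ Finset.Icc 0 ⌊t⌋₊, c k))
      = (-s) * (((x:ℂ)^(1-s) - 1)/(1-s))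
        + s * ((∫ t in Ioi (1:ℝ), saw t * (t:ℂ)^(-s-1)) - ∫ t in Ioi x, saw t * (t:ℂ)^(-s-1))
        + (s/2) * (((x:ℂ)^(-s) - 1)/(-s)) := by
    have heq : EqOn (fun t : ℝ => deriv f t * (∑ k ∈ Finset.Icc 0 ⌊t⌋₊, c k))
        (fun t : ℝ => (-s) * (t:ℂ)^(-s) + s * (saw t * (t:ℂ)^(-s-1)) + (s/2) * (t:ℂ)^(-s-1))
        (Ioc 1 x) := by
      intro t ht
      have ht0 : (0:ℝ) < t := by linarith [ht.1]
      have htc : (t:ℂ) ≠ 0 := Complex.ofReal_ne_zero.mpr (ne_of_gt ht0)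
      have hpow : (t:ℂ) * (t:ℂ)^(-s-1) = (t:ℂ)^(-s) := by
        rw [Complex.cpow_sub _ _ htc, Complex.cpow_one]
        field_simp
      simp only [csum ⌊t⌋₊, hderiv_eq t ht0, floor_cast_complex ht0.le, ← hpow]
      ring
    rw [setIntegral_congr_fun measurableSet_Ioc heq]
    have e1 : IntegrableOn (fun t : ℝ => (-s) * (t:ℂ)^(-s)) (Ioc 1 x) := IntA.const_mul _
    have e2 : IntegrableOn (fun t : ℝ => s * (saw t * (t:ℂ)^(-s-1))) (Ioc 1 x) := IntB.const_mul _
    have e3 : IntegrableOn (fun t : ℝ => (s/2) * (t:ℂ)^(-s-1)) (Ioc 1 x) := IntC.const_mul _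
    have e12 : IntegrableOn (fun t : ℝ => (-s) * (t:ℂ)^(-s) + s * (saw t * (t:ℂ)^(-s-1)))
        (Ioc 1 x) := e1.add e2
    rw [integral_add e12 e3, integral_add e1 e2, MeasureTheory.integral_const_mul, MeasureTheory.integral_const_mul,
      MeasureTheory.integral_const_mul, I1, I2]
    have : (∫ t in Ioc 1 x, saw t * (t:ℂ)^(-s-1))
        = (∫ t in Ioi (1:ℝ), saw t * (t:ℂ)^(-s-1)) - ∫ t in Ioi x, saw t * (t:ℂ)^(-s-1) := by
      rw [hsplit]; ring
    rw [this]
  rw [lhs_eq, hIeq] at key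
  have hxc : (x:ℂ) ≠ 0 := Complex.ofReal_ne_zero.mpr (ne_of_gt hx0)
  have hxf : f x = (x:ℂ)^(-s) := rfl
  have hxsum : (∑ k ∈ Finset.Icc 0 ⌊x⌋₊, c k) = (x:ℂ) - saw x - 1/2 := by
    rw [csum ⌊x⌋₊, floor_cast_complex hx0.le]
  rw [hxf, hxsum] at key
  have hxpow : (x:ℂ)^(1-s) = (x:ℂ) * (x:ℂ)^(-s) := by
    rw [sub_eq_add_neg, Complex.cpow_add _ _ hxc, Complex.cpow_one]
  rw [key, hxpow]
  field_simp
  ring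

lemma tail_norm (s : ℂ) (hs : 0 < s.re) {a : ℝ} (ha : 0 < a) :
    ‖∫ t in Ioi a, saw t * (t:ℂ)^(-s-1)‖ ≤ (1/2) * (a ^ (-s.re) / s.re) := by
  have hint : IntegrableOn (fun t : ℝ => (1/2) * t ^ (-s.re - 1)) (Ioi a) :=
    (integrableOn_Ioi_rpow_of_lt (by linarith) ha).const_mul _
  have hb : ‖∫ t in Ioi a, saw t * (t:ℂ)^(-s-1)‖
      ≤ ∫ t in Ioi a, (1/2) * t ^ (-s.re - 1) := by
    refine norm_integral_le_of_norm_le hint ?_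
    filter_upwards [ae_restrict_mem measurableSet_Ioi] with t ht
    have ht0 : 0 < t := lt_trans ha ht
    rw [norm_mul, norm_real_cpow ht0]
    have h2 : ((-s-1).re) = -s.re - 1 := by simp
    rw [h2]
    exact mul_le_mul_of_nonneg_right (saw_norm_le t) (Real.rpow_nonneg ht0.le _)
  have hval : ∫ t in Ioi a, (1/2) * t ^ (-s.re - 1) = (1/2) * (a ^ (-s.re) / s.re) := by
    rw [MeasureTheory.integral_const_mul, integral_Ioi_rpow_of_lt (by linarith) ha]
    rw [(show -s.re - 1 + 1 = -s.re by ring)]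
    field_simp
  linarith [hb, le_of_eq hval]

lemma Z_eq_zeta_of_one_lt (s : ℂ) (hs : 1 < s.re) :
    1/2 + 1/(s-1) - s * ∫ t in Ioi (1:ℝ), saw t * (t:ℂ)^(-s-1) = riemannZeta s := by
  have hs0 : 0 < s.re := by linarith
  have hs1 : s ≠ 1 := fun h => by rw [h] at hs; simp at hs
  set Z : ℂ := 1/2 + 1/(s-1) - s * ∫ t in Ioi (1:ℝ), saw t * (t:ℂ)^(-s-1) with hZ
  -- identity at natural x
  have hid : ∀ᶠ N : ℕ in atTop, (∑ n ∈ Finset.Icc 1 N, (n:ℂ)^(-s))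
      = Z + ((N:ℝ):ℂ)^(1-s)/(1-s) + (1/2) * ((N:ℝ):ℂ)^(-s)
        + s * ∫ t in Ioi (N:ℝ), saw t * (t:ℂ)^(-s-1) := by
    filter_upwards [eventually_ge_atTop 1] with N hN
    have hNx : (1:ℝ) ≤ (N:ℝ) := by exact_mod_cast hN
    have h := abel_id s hs0 hs1 (N:ℝ) hNx
    rw [Nat.floor_natCast] at h
    have hsawN : saw (N:ℝ) = -(1/2) := by
      rw [saw, Int.fract_natCast]
      norm_num
    rw [h, hsawN]
    ring
  -- limit of partial sums is zeta
  have hsummable : Summable (fun n : ℕ => 1/((n:ℂ)+1)^s) := by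
    have h1 : Summable (fun n : ℕ => 1/((n:ℂ))^s) := by
      rw [Complex.summable_one_div_nat_cpow]; exact hs
    have h2 := (summable_nat_add_iff 1).mpr h1
    refine h2.congr fun n => ?_
    push_cast
    ring_nf
  have T1 : Tendsto (fun N : ℕ => ∑ n ∈ Finset.Icc 1 N, (n:ℂ)^(-s)) atTop
      (𝓝 (riemannZeta s)) := by
    rw [zeta_eq_tsum_one_div_nat_add_one_cpow hs]
    have h := hsummable.hasSum.tendsto_sum_nat
    refine h.congr fun N => ?_
    rw [← Finset.Ico_add_one_right_eq_Icc, Finset.sum_Ico_eq_sum_range]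
    refine Finset.sum_congr (by norm_num) fun k _ => ?_
    rw [Complex.cpow_neg, one_div]
    push_cast
    rw [add_comm 1 (k:ℂ)]
  have T2 : Tendsto (fun N : ℕ => ((N:ℝ):ℂ)^(1-s)/(1-s)) atTop (𝓝 0) := by
    apply squeeze_zero_norm' (a := fun N : ℕ => (N:ℝ)^(1-s.re) / ‖1-s‖)
    · filter_upwards [eventually_ge_atTop 1] with N hN
      have hN0 : (0:ℝ) < N := by exact_mod_cast Nat.lt_of_lt_of_le Nat.zero_lt_one hN
      rw [norm_div, norm_real_cpow hN0]
      simp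
    · have h1 : Tendsto (fun y : ℝ => y ^ (-(s.re - 1))) atTop (𝓝 0) :=
        tendsto_rpow_neg_atTop (by linarith)
      have h2 := (h1.comp (tendsto_natCast_atTop_atTop (R := ℝ))).div_const ‖1-s‖
      simpa [(show -(s.re - 1) = 1 - s.re by ring)] using h2
  have T3 : Tendsto (fun N : ℕ => (1/2 : ℂ) * ((N:ℝ):ℂ)^(-s)) atTop (𝓝 0) := by
    apply squeeze_zero_norm' (a := fun N : ℕ => (1/2) * (N:ℝ)^(-s.re))
    · filter_upwards [eventually_ge_atTop 1] with N hN
      have hN0 : (0:ℝ) < N := by exact_mod_cast Nat.lt_of_lt_of_le Nat.zero_lt_one hN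
      rw [norm_mul, norm_real_cpow hN0]
      simp
    · have h1 : Tendsto (fun y : ℝ => y ^ (-s.re)) atTop (𝓝 0) :=
        tendsto_rpow_neg_atTop (by linarith)
      simpa using ((h1.comp (tendsto_natCast_atTop_atTop (R := ℝ))).const_mul (1/2 : ℝ))
  have T4 : Tendsto (fun N : ℕ => s * ∫ t in Ioi ((N:ℝ)), saw t * (t:ℂ)^(-s-1)) atTop (𝓝 0) := by
    apply squeeze_zero_norm' (a := fun N : ℕ => ‖s‖ * ((1/2) * ((N:ℝ)^(-s.re) / s.re)))
    · filter_upwards [eventually_ge_atTop 1] with N hN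
      have hN0 : (0:ℝ) < N := by exact_mod_cast Nat.lt_of_lt_of_le Nat.zero_lt_one hN
      rw [norm_mul]
      exact mul_le_mul_of_nonneg_left (tail_norm s hs0 hN0) (norm_nonneg s)
    · have h1 : Tendsto (fun y : ℝ => y ^ (-s.re)) atTop (𝓝 0) :=
        tendsto_rpow_neg_atTop (by linarith)
      have h2 := (((h1.comp (tendsto_natCast_atTop_atTop (R := ℝ))).div_const s.re).const_mul
        (1/2 : ℝ)).const_mul ‖s‖
      simpa using h2
  have T5 : Tendsto (fun N : ℕ => Z + ((N:ℝ):ℂ)^(1-s)/(1-s) + (1/2) * ((N:ℝ):ℂ)^(-s)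
      + s * ∫ t in Ioi ((N:ℝ)), saw t * (t:ℂ)^(-s-1)) atTop (𝓝 Z) := by
    have := ((tendsto_const_nhds (x := Z) (f := atTop)).add T2).add T3 |>.add T4
    simpa using this
  have := T1.congr' hid
  exact (tendsto_nhds_unique this T5).symm

lemma F_hasDerivAt (s₀ : ℂ) (h : 0 < s₀.re) :
    HasDerivAt (fun s : ℂ => ∫ t in Ioi (1:ℝ), saw t * (t:ℂ)^(-s-1))
      (∫ t in Ioi (1:ℝ), saw t * ((t:ℂ)^(-s₀-1) * Complex.log t * (-1))) s₀ := by
  set σ := s₀.re with hσ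
  have hσ4 : 0 < σ/4 := by linarith
  refine (hasDerivAt_integral_of_dominated_loc_of_deriv_le
    (F := fun (s : ℂ) (t : ℝ) => saw t * (t:ℂ)^(-s-1))
    (F' := fun (s : ℂ) (t : ℝ) => saw t * ((t:ℂ)^(-s-1) * Complex.log t * (-1)))
    (bound := fun t : ℝ => (2/σ) * t ^ (σ/4 - σ/2 - 1))
    (Metric.ball_mem_nhds s₀ (half_pos h)) ?_ ?_ ?_ ?_ ?_ ?_).2
  · exact Eventually.of_forall fun s => (saw_meas.mul (cpow_meas _)).aestronglyMeasurable
  · exact integrableOn_saw_Ioi s₀ h one_pos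
  · exact (saw_meas.mul (((cpow_meas _).mul
      (Complex.measurable_log.comp Complex.measurable_ofReal)).mul measurable_const)).aestronglyMeasurable
  · filter_upwards [ae_restrict_mem measurableSet_Ioi] with t ht s hsball
    have ht1 : (1:ℝ) < t := ht
    have ht0 : (0:ℝ) < t := by linarith
    have hre : σ/2 ≤ s.re := by
      have h1 : |(s - s₀).re| ≤ ‖s - s₀‖ := Complex.abs_re_le_norm _
      rw [Metric.mem_ball, Complex.dist_eq] at hsball
      have h2 : |(s - s₀).re| < σ/2 := lt_of_le_of_lt h1 hsball
      rw [Complex.sub_re, abs_lt] at h2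
      linarith [h2.1]
    have hlog0 : 0 ≤ Real.log t := Real.log_nonneg ht1.le
    have hlogC : Complex.log (t:ℂ) = ((Real.log t : ℝ) : ℂ) := (Complex.ofReal_log ht0.le).symm
    rw [norm_mul, norm_mul, norm_mul, hlogC, Complex.norm_real, norm_neg, norm_one, mul_one,
      Real.norm_eq_abs, _root_.abs_of_nonneg hlog0, norm_real_cpow ht0]
    have h1 : ‖saw t‖ * (t ^ ((-s-1).re) * Real.log t)
        ≤ (1/2) * (t ^ (-(σ/2) - 1) * ((4/σ) * t ^ (σ/4))) := by
      have e1 : t ^ ((-s-1).re) ≤ t ^ (-(σ/2) - 1) := by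
        apply Real.rpow_le_rpow_of_exponent_le ht1.le
        simp only [Complex.sub_re, Complex.neg_re, Complex.one_re]
        linarith
      have e2 : Real.log t ≤ (4/σ) * t ^ (σ/4) := by
        have h3 : (σ/4) * Real.log t = Real.log (t ^ (σ/4)) := (Real.log_rpow ht0 _).symm
        have h4 : Real.log (t ^ (σ/4)) ≤ t ^ (σ/4) - 1 :=
          Real.log_le_sub_one_of_pos (Real.rpow_pos_of_pos ht0 _)
        have h5 : (0:ℝ) < t ^ (σ/4) := Real.rpow_pos_of_pos ht0 _
        rw [div_mul_eq_mul_div, le_div_iff₀ (by linarith : (0:ℝ) < σ)]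
        nlinarith
      calc ‖saw t‖ * (t ^ ((-s-1).re) * Real.log t)
          ≤ (1/2) * (t ^ ((-s-1).re) * Real.log t) := by
            apply mul_le_mul_of_nonneg_right (saw_norm_le t)
            positivity
        _ ≤ (1/2) * (t ^ (-(σ/2) - 1) * ((4/σ) * t ^ (σ/4))) := by
            apply mul_le_mul_of_nonneg_left _ (by norm_num)
            apply mul_le_mul e1 e2 hlog0 (Real.rpow_nonneg ht0.le _)
    calc ‖saw t‖ * (t ^ ((-s-1).re) * Real.log t)
        ≤ (1/2) * (t ^ (-(σ/2) - 1) * ((4/σ) * t ^ (σ/4))) := h1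
      _ = (2/σ) * t ^ (σ/4 - σ/2 - 1) := by
          rw [(show σ/4 - σ/2 - 1 = (-(σ/2) - 1) + σ/4 by ring), Real.rpow_add ht0]
          field_simp
          ring
  · exact (integrableOn_Ioi_rpow_of_lt (by linarith) one_pos).const_mul _
  · filter_upwards [ae_restrict_mem measurableSet_Ioi] with t ht s _
    have ht0 : (0:ℝ) < t := lt_trans one_pos ht
    have htc : (t:ℂ) ≠ 0 := Complex.ofReal_ne_zero.mpr (ne_of_gt ht0)
    have hinner : HasDerivAt (fun s : ℂ => -s - 1) (-1) s := by
      simpa using ((hasDerivAt_id s).neg.sub_const 1)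
    exact (hinner.const_cpow (Or.inl htc)).const_mul (saw t)

lemma Z_eq_zeta (s : ℂ) (hs0 : 0 < s.re) (hs1 : s ≠ 1) :
    1/2 + 1/(s-1) - s * ∫ t in Ioi (1:ℝ), saw t * (t:ℂ)^(-s-1) = riemannZeta s := by
  set Z : ℂ → ℂ := fun w => 1/2 + 1/(w-1) - w * ∫ t in Ioi (1:ℝ), saw t * (t:ℂ)^(-w-1) with hZ
  set A : Set ℂ := {z : ℂ | 0 < z.re ∧ z.re < 1} with hA
  set B : Set ℂ := {z : ℂ | 1 < z.re} with hB
  set C : Set ℂ := {z : ℂ | 0 < z.re ∧ 0 < z.im} with hC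
  set D : Set ℂ := {z : ℂ | 0 < z.re ∧ z.im < 0} with hD
  set U : Set ℂ := {z : ℂ | 0 < z.re ∧ z ≠ 1} with hU
  have hUopen : IsOpen U := by
    have : U = {z : ℂ | 0 < z.re} ∩ {(1:ℂ)}ᶜ := by
      ext z; simp [hU, Set.mem_setOf_eq]
    rw [this]
    exact (isOpen_lt continuous_const Complex.continuous_re).inter isOpen_compl_singleton
  have hset : U = ((A ∪ C) ∪ B) ∪ D := by
    ext z
    simp only [hU, hA, hB, hC, hD, Set.mem_setOf_eq, Set.mem_union]
    constructor
    · rintro ⟨h0, h1⟩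
      rcases lt_trichotomy z.im 0 with him|him|him
      · right; exact ⟨h0, him⟩
      · rcases lt_trichotomy z.re 1 with hre|hre|hre
        · left; left; left; exact ⟨h0, hre⟩
        · exact absurd (Complex.ext (by simpa using hre) (by simpa using him)) h1
        · left; right; exact hre
      · left; left; right; exact ⟨h0, him⟩
    · rintro (((⟨h0,h1⟩|⟨h0,h1⟩)|h1)|⟨h0,h1⟩)
      · exact ⟨h0, fun he => by rw [he] at h1; simp at h1⟩
      · exact ⟨h0, fun he => by rw [he] at h1; simp at h1⟩
      · exact ⟨by linarith, fun he => by rw [he] at h1; simp at h1⟩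
      · exact ⟨h0, fun he => by rw [he] at h1; simp at h1⟩
  have hpre : IsPreconnected U := by
    rw [hset]
    have hAc : Convex ℝ A := (convex_halfSpace_re_gt 0).inter (convex_halfSpace_re_lt 1)
    have hBc : Convex ℝ B := convex_halfSpace_re_gt 1
    have hCc : Convex ℝ C := (convex_halfSpace_re_gt 0).inter (convex_halfSpace_im_gt 0)
    have hDc : Convex ℝ D := (convex_halfSpace_re_gt 0).inter (convex_halfSpace_im_lt 0)
    have hAC : IsPreconnected (A ∪ C) := by
      refine IsPreconnected.union ((1/2 : ℂ) + Complex.I) ?_ ?_ hAc.isPreconnected hCc.isPreconnected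
      · constructor <;> simp <;> try norm_num
      · constructor <;> simp <;> try norm_num
    have hACB : IsPreconnected ((A ∪ C) ∪ B) := by
      refine IsPreconnected.union ((2 : ℂ) + Complex.I) ?_ ?_ hAC hBc.isPreconnected
      · right; constructor <;> simp <;> try norm_num
      · simp [hB]
    refine IsPreconnected.union ((1/2 : ℂ) - Complex.I) ?_ ?_ hACB hDc.isPreconnected
    · left; left; constructor <;> simp <;> try norm_num
    · constructor <;> simp <;> try norm_num
  have hZdiff : DifferentiableOn ℂ Z U := by
    intro z hz
    have hz1 : z - 1 ≠ 0 := sub_ne_zero_of_ne hz.2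
    have hd1 : DifferentiableAt ℂ (fun w : ℂ => 1/(w-1)) z :=
      (differentiableAt_const _).div (differentiableAt_id.sub (differentiableAt_const 1)) hz1
    have hdF : DifferentiableAt ℂ (fun w : ℂ => ∫ t in Ioi (1:ℝ), saw t * (t:ℂ)^(-w-1)) z :=
      (F_hasDerivAt z hz.1).differentiableAt
    exact (((differentiableAt_const _).add hd1).sub (differentiableAt_id.mul hdF)).differentiableWithinAt
  have hζdiff : DifferentiableOn ℂ riemannZeta U :=
    fun z hz => (differentiableAt_riemannZeta hz.2).differentiableWithinAt
  have h2U : (2:ℂ) ∈ U := by constructor <;> simp <;> try norm_num <;> norm_num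
  have hev : Z =ᶠ[𝓝 (2:ℂ)] riemannZeta := by
    have hmem : {z : ℂ | 1 < z.re} ∈ 𝓝 (2:ℂ) := by
      refine (isOpen_lt continuous_const Complex.continuous_re).mem_nhds ?_
      simp
    filter_upwards [hmem] with z hz using Z_eq_zeta_of_one_lt z hz
  exact (hZdiff.analyticOnNhd hUopen).eqOn_of_preconnected_of_eventuallyEq
    (hζdiff.analyticOnNhd hUopen) hpre h2U hev ⟨hs0, hs1⟩

theorem partial_sum_zeta_sawtooth (s : ℂ) (hs0 : 0 < s.re) (hs1 : s.re < 1)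
    (x : ℝ) (hx : 1 ≤ x) :
    ∑ n ∈ Finset.Icc 1 ⌊x⌋₊, (n : ℂ) ^ (-s)
      = riemannZeta s + (x : ℂ) ^ (1 - s) / (1 - s)
        - ((Int.fract x - 1/2 : ℝ) : ℂ) * (x : ℂ) ^ (-s)
        + s * ∫ t in Set.Ioi x, ((Int.fract t - 1/2 : ℝ) : ℂ) * (t : ℂ) ^ (-s - 1) := by
  have hs1' : s ≠ 1 := fun h => by rw [h] at hs1; simp at hs1
  have h := abel_id s hs0 hs1' x hx
  rw [Z_eq_zeta s hs0 hs1'] at h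
  simpa [saw] using h
end

section
/- Let z : ℝ → ℂ be twice continuously differentiable, τ ∈ ℝ, z(τ) = 0, and suppose |z″(t)| ≤ B for all t in [τ, τ+h] with h = |z′(τ)|/B (assume z′(τ) ≠ 0 and B > 0). Then ∫_0^h |z(τ+u)/u|² du ≥ |z′(τ)|·(h·|z′(τ)| − (h²/2)·B) = |z′(τ)|³/(2B). -/
open MeasureTheory

theorem taylor_quadratic_integral_bound
    (z : ℝ → ℂ) (hz : ContDiff ℝ 2 z) (τ : ℝ) (hzero : z τ = 0)
    (B : ℝ) (hB : 0 < B) (hz' : deriv z τ ≠ 0)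
    (h : ℝ) (hh : h = ‖deriv z τ‖ / B)
    (hz'' : ∀ t ∈ Set.Icc τ (τ + h), ‖deriv (deriv z) t‖ ≤ B) :
    (∫ u in (0:ℝ)..h, ‖z (τ + u) / u‖ ^ 2)
        ≥ ‖deriv z τ‖ * (h * ‖deriv z τ‖ - h ^ 2 / 2 * B) ∧
      ‖deriv z τ‖ * (h * ‖deriv z τ‖ - h ^ 2 / 2 * B) = ‖deriv z τ‖ ^ 3 / (2 * B) := by
  set A := ‖deriv z τ‖ with hAdef
  have hA0 : 0 < A := norm_pos_iff.mpr hz'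
  have hh0 : 0 < h := by rw [hh]; positivity
  have hBh : B * h = A := by rw [hh]; field_simp
  have hz1 : ContDiff ℝ 1 (deriv z) := by
    have h2 : ContDiff ℝ (1 + 1 : ℕ) z := by norm_num; exact_mod_cast hz
    exact (contDiff_succ_iff_deriv.mp h2).2.2
  have hdz : Differentiable ℝ z := hz.differentiable two_ne_zero
  have hdz' : Differentiable ℝ (deriv z) := hz1.differentiable one_ne_zero
  have hcz' : Continuous (deriv z) := hz1.continuous
  have hcz'' : Continuous (deriv (deriv z)) := (contDiff_one_iff_deriv.mp hz1).2
  -- Step 1: MVT-type bound on deriv z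
  have key2 : ∀ v ∈ Set.Icc (0:ℝ) h, ‖deriv z (τ + v) - deriv z τ‖ ≤ B * v := by
    intro v hv
    have hftc : (∫ w in (0:ℝ)..v, deriv (deriv z) (τ + w))
        = deriv z (τ + v) - deriv z (τ + 0) := by
      have := intervalIntegral.integral_deriv_eq_sub
        (f := fun w => deriv z (τ + w)) (a := 0) (b := v)
        (fun x _ => (hdz' (τ + x)).comp x (by fun_prop))
        (by
          have : (deriv fun w => deriv z (τ + w)) = fun w => deriv (deriv z) (τ + w) :=
            funext fun w => deriv_comp_const_add (deriv z) τ w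
          rw [this]
          exact (hcz''.comp (by fun_prop)).intervalIntegrable 0 v)
      rw [← this]
      congr 1
      exact funext fun w => (deriv_comp_const_add (deriv z) τ w).symm
    have : ‖deriv z (τ + v) - deriv z (τ + 0)‖ ≤ B * |v - 0| := by
      rw [← hftc]
      apply intervalIntegral.norm_integral_le_of_norm_le_const
      intro w hw
      rw [Set.uIoc_of_le hv.1] at hw
      exact hz'' (τ + w) ⟨by linarith [hw.1], by linarith [hw.2, hv.2]⟩
    simpa [abs_of_nonneg hv.1] using this
  -- Step 2: Taylor bound
  have key1 : ∀ u ∈ Set.Icc (0:ℝ) h, ‖z (τ + u) - u • deriv z τ‖ ≤ B * u ^ 2 / 2 := by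
    intro u hu
    have hg : ∀ w : ℝ, HasDerivAt (fun w => z (τ + w) - w • deriv z τ)
        (deriv z (τ + w) - deriv z τ) w := by
      intro w
      have h1 : HasDerivAt (fun w => z (τ + w)) (deriv z (τ + w)) w := by
        have hin : HasDerivAt (fun x : ℝ => τ + x) 1 w := by
          simpa using (hasDerivAt_id w).const_add τ
        have := HasDerivAt.scomp w ((hdz (τ + w)).hasDerivAt) hin; simp only [one_smul] at this; exact this
      have h2 : HasDerivAt (fun w : ℝ => w • deriv z τ) (deriv z τ) w := by
        simpa using (hasDerivAt_id w).smul_const (deriv z τ)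
      exact h1.sub h2
    have hftc : (∫ w in (0:ℝ)..u, (deriv z (τ + w) - deriv z τ))
        = (z (τ + u) - u • deriv z τ) - (z (τ + 0) - (0:ℝ) • deriv z τ) := by
      exact intervalIntegral.integral_eq_sub_of_hasDerivAt (fun x _ => hg x)
        (((hcz'.comp (by fun_prop)).sub continuous_const).intervalIntegrable 0 u)
    have hval : z (τ + u) - u • deriv z τ = ∫ w in (0:ℝ)..u, (deriv z (τ + w) - deriv z τ) := by
      rw [hftc]; simp [hzero]
    rw [hval]
    have hb : ‖∫ w in (0:ℝ)..u, (deriv z (τ + w) - deriv z τ)‖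
        ≤ ∫ w in (0:ℝ)..u, B * w := by
      calc ‖∫ w in (0:ℝ)..u, (deriv z (τ + w) - deriv z τ)‖
          ≤ ∫ w in (0:ℝ)..u, ‖deriv z (τ + w) - deriv z τ‖ :=
            intervalIntegral.norm_integral_le_integral_norm hu.1
        _ ≤ ∫ w in (0:ℝ)..u, B * w := by
            apply intervalIntegral.integral_mono_on hu.1
            · exact (((hcz'.comp (by fun_prop)).sub continuous_const).norm).intervalIntegrable 0 u
            · exact (continuous_const.mul continuous_id).intervalIntegrable 0 u
            · intro w hw
              exact key2 w ⟨hw.1, le_trans hw.2 hu.2⟩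
    have : (∫ w in (0:ℝ)..u, B * w) = B * u ^ 2 / 2 := by
      rw [intervalIntegral.integral_const_mul, integral_id]; ring
    linarith [hb, this ▸ hb]
  -- pointwise bounds on (0, h]
  have hlow : ∀ u ∈ Set.Ioc (0:ℝ) h, A ^ 2 - A * B * u ≤ ‖z (τ + u) / u‖ ^ 2 := by
    intro u hu
    have ht1 := key1 u ⟨le_of_lt hu.1, hu.2⟩
    have hsm : ‖u • deriv z τ‖ = u * A := by
      rw [norm_smul, Real.norm_eq_abs, abs_of_pos hu.1]
    have htri := norm_sub_norm_le (u • deriv z τ) (z (τ + u))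
    rw [norm_sub_rev] at htri
    have hz2 : u * A - B * u ^ 2 / 2 ≤ ‖z (τ + u)‖ := by
      rw [hsm] at htri; linarith
    have hnorm : ‖z (τ + u) / u‖ = ‖z (τ + u)‖ / u := by
      rw [norm_div]
      norm_num [abs_of_pos hu.1]
    have hBu : B * u ≤ A := by
      calc B * u ≤ B * h := by nlinarith [hu.2]
        _ = A := hBh
    have hlb : A - B * u / 2 ≤ ‖z (τ + u) / u‖ := by
      rw [hnorm, le_div_iff₀ hu.1]
      nlinarith
    have h0 : 0 ≤ A - B * u / 2 := by linarith
    have hsq := mul_self_le_mul_self h0 hlb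
    nlinarith [hsq, sq_nonneg (B * u)]
  have hup : ∀ u ∈ Set.Ioc (0:ℝ) h, ‖z (τ + u) / u‖ ^ 2 ≤ (A + B * h / 2) ^ 2 := by
    intro u hu
    have ht1 := key1 u ⟨le_of_lt hu.1, hu.2⟩
    have hsm : ‖u • deriv z τ‖ = u * A := by
      rw [norm_smul, Real.norm_eq_abs, abs_of_pos hu.1]
    have htri2 : ‖z (τ + u)‖ ≤ u * A + B * u ^ 2 / 2 := by
      have h4 := norm_le_norm_add_norm_sub' (z (τ + u)) (u • deriv z τ)
      rw [hsm] at h4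
      have h5 : ‖u • deriv z τ - z (τ + u)‖ = ‖z (τ + u) - u • deriv z τ‖ :=
        norm_sub_rev _ _
      linarith
    have hnorm : ‖z (τ + u) / u‖ = ‖z (τ + u)‖ / u := by
      rw [norm_div]
      norm_num [abs_of_pos hu.1]
    have hub : ‖z (τ + u) / u‖ ≤ A + B * u / 2 := by
      rw [hnorm, div_le_iff₀ hu.1]
      nlinarith
    have : ‖z (τ + u) / u‖ ≤ A + B * h / 2 := by nlinarith [hu.2]
    nlinarith [norm_nonneg (z (τ + u) / u)]
  -- integrability
  have hmeas : AEStronglyMeasurable (fun u : ℝ => ‖z (τ + u) / u‖ ^ 2)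
      (volume.restrict (Set.uIoc (0:ℝ) h)) := by
    apply Measurable.aestronglyMeasurable
    have h1 : Measurable fun u : ℝ => z (τ + u) :=
      (hz.continuous.comp (continuous_const.add continuous_id)).measurable
    have h2 : Measurable fun u : ℝ => ((u : ℂ))⁻¹ := Complex.measurable_ofReal.inv
    simp only [div_eq_mul_inv]
    exact ((h1.mul h2).norm.pow_const 2)
  have hint1 : IntervalIntegrable (fun u : ℝ => ‖z (τ + u) / u‖ ^ 2) volume 0 h := by
    rw [intervalIntegrable_iff]
    apply Integrable.mono' (g := fun _ => (A + B * h / 2) ^ 2)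
      (integrableOn_const (by rw [Set.uIoc_of_le hh0.le]; exact measure_Ioc_lt_top.ne))
      hmeas
    refine (ae_restrict_iff' measurableSet_uIoc).mpr (Filter.Eventually.of_forall ?_)
    intro u hu
    rw [Set.uIoc_of_le hh0.le] at hu
    rw [Real.norm_eq_abs, abs_of_nonneg (by positivity)]
    exact hup u hu
  have hint2 : IntervalIntegrable (fun u : ℝ => A ^ 2 - A * B * u) volume 0 h :=
    (continuous_const.sub (continuous_const.mul continuous_id)).intervalIntegrable 0 h
  -- a.e. comparison
  have hae : (fun u : ℝ => A ^ 2 - A * B * u)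
      ≤ᵐ[volume.restrict (Set.Icc (0:ℝ) h)] (fun u : ℝ => ‖z (τ + u) / u‖ ^ 2) := by
    have h1 : ∀ᵐ (u : ℝ) ∂volume, u ≠ 0 := by
      refine (MeasureTheory.ae_iff).mpr ?_
      convert Real.volume_singleton (a := 0) using 2
      ext u; simp
    have h2 : ∀ᵐ u ∂(volume.restrict (Set.Icc (0:ℝ) h)), u ∈ Set.Icc (0:ℝ) h :=
      ae_restrict_mem measurableSet_Icc
    filter_upwards [ae_restrict_of_ae h1, h2] with u hu1 hu2
    exact hlow u ⟨lt_of_le_of_ne hu2.1 (Ne.symm hu1), hu2.2⟩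
  have hmono := intervalIntegral.integral_mono_ae_restrict hh0.le hint2 hint1 hae
  have hcalc : (∫ u in (0:ℝ)..h, (A ^ 2 - A * B * u)) = A * (h * A - h ^ 2 / 2 * B) := by
    rw [intervalIntegral.integral_sub intervalIntegrable_const
      (Continuous.intervalIntegrable (u := fun u : ℝ => A * B * u) (continuous_const.mul continuous_id') 0 h),
      intervalIntegral.integral_const, intervalIntegral.integral_const_mul, integral_id]
    simp
    ring
  constructor
  · rw [hcalc] at hmono; exact hmono
  · rw [hh]; field_simp; ring
end
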